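/- Let n ≥ 5 be an integer. Then I₂(ℓ) / ( V(ℓ) )^{(n−4)/n} → −∞ as ℓ → ∞; here V(ℓ) > 0 for every ℓ > 0, so the real power is well defined. (Geometrically, this says that for the conformal metrics g_ℓ = e^{−2ℓs²} g_{S^n} on the round sphere, the quotient ∫ σ₂(g_ℓ) dvol(g_ℓ) / vol(g_ℓ)^{(n−4)/n} tends to −∞, so without the positive scalar curvature constraint the σ₂-Yamabe functional is unbounded below on the conformal class of the round sphere.) -/

import Mathlib

open Real Filter

/-- First eigenvalue of the Schouten tensor of `g_ℓ = e^{−2ℓs²} g_{S^n}` w.r.t. `g_{S^n}`. -/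
noncomputable def lam1 (ℓ s : ℝ) : ℝ :=
  1 / 2 + 2 * ℓ - 4 * ℓ * s ^ 2 + 2 * ℓ ^ 2 * s ^ 2 * (1 - s ^ 2)

/-- Second eigenvalue (of multiplicity `n − 1`). -/
noncomputable def lam2 (ℓ s : ℝ) : ℝ :=
  1 / 2 - 2 * ℓ * s ^ 2 - 2 * ℓ ^ 2 * s ^ 2 * (1 - s ^ 2)

/-- Total σ₂-curvature integral `I₂(ℓ)` (up to the factor `ω_{n−1}`). -/
noncomputable def I2 (n : ℕ) (ℓ : ℝ) : ℝ :=
  ∫ s in (-1 : ℝ)..1,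
    Real.exp (-((n : ℝ) - 4) * ℓ * s ^ 2) * (1 - s ^ 2) ^ (((n : ℝ) - 2) / 2) *
      ((n - 1) * lam1 ℓ s * lam2 ℓ s + ((n - 1) * (n - 2) / 2) * (lam2 ℓ s) ^ 2)

/-- Volume integral `V(ℓ)` (up to the factor `ω_{n−1}`). -/
noncomputable def V (n : ℕ) (ℓ : ℝ) : ℝ :=
  ∫ s in (-1 : ℝ)..1,
    Real.exp (-(n : ℝ) * ℓ * s ^ 2) * (1 - s ^ 2) ^ (((n : ℝ) - 2) / 2)



set_option maxHeartbeats 1000000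

open MeasureTheory intervalIntegral Set

namespace Stmt13Aux

noncomputable def G (n : ℕ) (ℓ s : ℝ) : ℝ :=
  Real.exp (-((n : ℝ) - 4) * ℓ * s ^ 2) * (1 - s ^ 2) ^ (((n : ℝ) - 2) / 2)

noncomputable def M (n : ℕ) (ℓ : ℝ) (k : ℕ) : ℝ :=
  ∫ s in (-1 : ℝ)..1, s ^ (2 * k) * G n ℓ s

lemma hc0 {n : ℕ} (hn : 5 ≤ n) : (0:ℝ) ≤ ((n:ℝ)-2)/2 := by
  have : (5:ℝ) ≤ (n:ℝ) := by exact_mod_cast hn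
  linarith

lemma contOn_rpow (q : ℝ) (hq : 0 ≤ q) :
    ContinuousOn (fun s : ℝ => (1 - s ^ 2) ^ q) (Set.uIcc (-1:ℝ) 1) :=
  (continuous_const.sub (continuous_pow 2)).continuousOn.rpow_const fun _ _ => Or.inr hq

lemma contG {n : ℕ} (hn : 5 ≤ n) (ℓ : ℝ) : ContinuousOn (G n ℓ) (Set.uIcc (-1:ℝ) 1) := by
  have e : G n ℓ = fun s => Real.exp (-((n : ℝ) - 4) * ℓ * s ^ 2) * (1 - s ^ 2) ^ (((n : ℝ) - 2) / 2) := rfl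
  rw [e]
  exact (Continuous.continuousOn (by fun_prop)).mul (contOn_rpow _ (hc0 hn))

lemma integ_fG {n : ℕ} (hn : 5 ≤ n) (ℓ : ℝ) (f : ℝ → ℝ) (hf : Continuous f) :
    IntervalIntegrable (fun s => f s * G n ℓ s) volume (-1 : ℝ) 1 :=
  (hf.continuousOn.mul (contG hn ℓ)).intervalIntegrable

lemma split5 {n : ℕ} (hn : 5 ≤ n) (ℓ d₀ d₁ d₂ d₃ d₄ : ℝ) :
    ∫ s in (-1:ℝ)..1, (d₀ + d₁*s^2 + d₂*s^4 + d₃*s^6 + d₄*s^8) * G n ℓ s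
      = d₀ * M n ℓ 0 + d₁ * M n ℓ 1 + d₂ * M n ℓ 2 + d₃ * M n ℓ 3 + d₄ * M n ℓ 4 := by
  have hk : ∀ k : ℕ, IntervalIntegrable (fun s => s^k * G n ℓ s) volume (-1 : ℝ) 1 :=
    fun k => integ_fG hn ℓ _ (continuous_pow k)
  rw [show (fun s : ℝ => (d₀ + d₁*s^2 + d₂*s^4 + d₃*s^6 + d₄*s^8) * G n ℓ s)
      = fun s : ℝ => d₀*(s^0*G n ℓ s) + (d₁*(s^2*G n ℓ s) + (d₂*(s^4*G n ℓ s)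
        + (d₃*(s^6*G n ℓ s) + d₄*(s^8*G n ℓ s)))) from funext fun s => by ring]
  rw [integral_add ((hk 0).const_mul d₀) (((hk 2).const_mul d₁).add (((hk 4).const_mul d₂).add
        (((hk 6).const_mul d₃).add ((hk 8).const_mul d₄)))),
      integral_add ((hk 2).const_mul d₁) (((hk 4).const_mul d₂).add
        (((hk 6).const_mul d₃).add ((hk 8).const_mul d₄))),
      integral_add ((hk 4).const_mul d₂) (((hk 6).const_mul d₃).add ((hk 8).const_mul d₄)),
      integral_add ((hk 6).const_mul d₃) ((hk 8).const_mul d₄)]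
  simp only [intervalIntegral.integral_const_mul, M]
  norm_num
  ring

lemma split3 {n : ℕ} (hn : 5 ≤ n) (ℓ : ℝ) (m : ℕ) (d₀ d₁ d₂ : ℝ) :
    ∫ s in (-1:ℝ)..1, (d₀ * s^(2*m) + d₁ * s^(2*m+2) + d₂ * s^(2*m+4)) * G n ℓ s
      = d₀ * M n ℓ m + d₁ * M n ℓ (m+1) + d₂ * M n ℓ (m+2) := by
  have hk : ∀ k : ℕ, IntervalIntegrable (fun s => s^k * G n ℓ s) volume (-1 : ℝ) 1 :=
    fun k => integ_fG hn ℓ _ (continuous_pow k)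
  rw [show (fun s : ℝ => (d₀ * s^(2*m) + d₁ * s^(2*m+2) + d₂ * s^(2*m+4)) * G n ℓ s)
      = fun s : ℝ => d₀*(s^(2*m)*G n ℓ s) + (d₁*(s^(2*m+2)*G n ℓ s) + d₂*(s^(2*m+4)*G n ℓ s))
      from funext fun s => by ring]
  rw [integral_add ((hk _).const_mul d₀) (((hk _).const_mul d₁).add ((hk _).const_mul d₂)),
      integral_add ((hk _).const_mul d₁) ((hk _).const_mul d₂)]
  simp only [intervalIntegral.integral_const_mul, M,
    show 2*(m+1) = 2*m+2 from by ring, show 2*(m+2) = 2*m+4 from by ring]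
  ring

lemma hR {n : ℕ} (hn : 5 ≤ n) (ℓ : ℝ) (m : ℕ) :
    (2*(m:ℝ)+1) * M n ℓ m - (2*(m:ℝ)+1+(n:ℝ)+2*((n:ℝ)-4)*ℓ) * M n ℓ (m+1)
      + 2*((n:ℝ)-4)*ℓ * M n ℓ (m+2) = 0 := by
  have hn5 : (5:ℝ) ≤ (n:ℝ) := by exact_mod_cast hn
  have hcne : (((n:ℝ)-2)/2 + 1) ≠ 0 := by intro h; nlinarith
  have hc1 : (1:ℝ) ≤ ((n:ℝ)-2)/2 + 1 := by linarith
  set F : ℝ → ℝ := fun s => Real.exp (-((n:ℝ)-4)*ℓ*s^2) * s^(2*m+1)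
      * (1-s^2)^(((n:ℝ)-2)/2+1) with hF
  set f : ℝ → ℝ := fun s => Real.exp (-((n:ℝ)-4)*ℓ*s^2) *
      ((2*(m:ℝ)+1) * s^(2*m) * (1-s^2)^(((n:ℝ)-2)/2+1)
       - 2*(((n:ℝ)-2)/2+1) * s^(2*m+2) * (1-s^2)^(((n:ℝ)-2)/2)
       - 2*((n:ℝ)-4)*ℓ * s^(2*m+2) * (1-s^2)^(((n:ℝ)-2)/2+1)) with hf
  have hder : ∀ s : ℝ, HasDerivAt F (f s) s := by
    intro s
    have h1 : HasDerivAt (fun s : ℝ => -((n:ℝ)-4)*ℓ*s^2) (-((n:ℝ)-4)*ℓ*(2*s)) s := by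
      have := (hasDerivAt_pow 2 s).const_mul (-((n:ℝ)-4)*ℓ)
      simpa [mul_comm, mul_assoc, mul_left_comm] using this
    have hexp := h1.exp
    have hpow : HasDerivAt (fun x : ℝ => x ^ (2*m+1)) ((2*(m:ℝ)+1) * s ^ (2*m)) s := by
      have h := hasDerivAt_pow (2*m+1) s
      have e1 : 2*m+1-1 = 2*m := by omega
      rw [e1] at h
      rw [show (2*(m:ℝ)+1) = ((2*m+1 : ℕ) : ℝ) by push_cast; ring]
      exact h
    have hbase : HasDerivAt (fun s : ℝ => 1 - s^2) (-(2*s)) s := by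
      have := (hasDerivAt_pow 2 s).const_sub 1
      simpa using this
    have hr := (Real.hasDerivAt_rpow_const (x := 1 - s^2) (p := ((n:ℝ)-2)/2+1) (Or.inr hc1)).comp s hbase
    have hrpow : HasDerivAt (fun s : ℝ => (1-s^2)^(((n:ℝ)-2)/2+1))
        ((((n:ℝ)-2)/2+1) * (1-s^2)^(((n:ℝ)-2)/2) * (-(2*s))) s := by
      rw [show ((n:ℝ)-2)/2+1-1 = ((n:ℝ)-2)/2 from by ring] at hr
      exact hr
    have := (hexp.mul hpow).mul hrpow
    refine HasDerivAt.congr_deriv this ?_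
    simp only [hf, Pi.mul_apply]
    ring
  have hFc : ContinuousOn f (Set.uIcc (-1:ℝ) 1) := by
    have c1 := contOn_rpow (((n:ℝ)-2)/2+1) (by linarith [hc0 hn])
    have c0 := contOn_rpow (((n:ℝ)-2)/2) (hc0 hn)
    simp only [hf]
    apply (Continuous.continuousOn (by fun_prop : Continuous
      (fun s : ℝ => Real.exp (-((n:ℝ)-4)*ℓ*s^2)))).mul
    exact (((Continuous.continuousOn (by fun_prop)).mul c1).sub
      ((Continuous.continuousOn (by fun_prop)).mul c0)).sub
      ((Continuous.continuousOn (by fun_prop)).mul c1)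
  have hint : IntervalIntegrable f volume (-1 : ℝ) 1 := hFc.intervalIntegrable
  have h0 : ∫ s in (-1:ℝ)..1, f s = 0 := by
    rw [intervalIntegral.integral_eq_sub_of_hasDerivAt (fun s _ => hder s) hint]
    simp only [hF]
    norm_num [Real.zero_rpow hcne]
  have hEq : Set.EqOn f (fun s => ((2*(m:ℝ)+1) * s^(2*m)
      + (-(2*(m:ℝ)+1+(n:ℝ)+2*((n:ℝ)-4)*ℓ)) * s^(2*m+2)
      + (2*((n:ℝ)-4)*ℓ) * s^(2*m+4)) * G n ℓ s) (Set.uIcc (-1:ℝ) 1) := by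
    intro s hs
    rw [Set.uIcc_of_le (by norm_num : (-1:ℝ) ≤ 1)] at hs
    have h1s : (0:ℝ) ≤ 1 - s^2 := by nlinarith [hs.1, hs.2]
    have hpw : (1-s^2)^(((n:ℝ)-2)/2+1) = (1-s^2)^(((n:ℝ)-2)/2) * (1-s^2) := by
      rcases h1s.eq_or_lt with h | h
      · rw [← h, Real.zero_rpow hcne, mul_zero]
      · exact Real.rpow_add_one h.ne' _
    simp only [hf, G]
    rw [hpw]
    ring
  rw [intervalIntegral.integral_congr hEq, split3 hn ℓ m] at h0
  linarith

lemma Gnonneg {n : ℕ} (ℓ s : ℝ) (hs : s ∈ Set.Icc (-1:ℝ) 1) : 0 ≤ G n ℓ s := by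
  have h1s : (0:ℝ) ≤ 1 - s^2 := by nlinarith [hs.1, hs.2]
  exact mul_nonneg (Real.exp_nonneg _) (Real.rpow_nonneg h1s _)

lemma hMnonneg {n : ℕ} (ℓ : ℝ) (k : ℕ) : 0 ≤ M n ℓ k := by
  apply intervalIntegral.integral_nonneg (by norm_num)
  intro s hs
  exact mul_nonneg (by rw [pow_mul]; positivity) (Gnonneg ℓ s hs)

lemma hMmono {n : ℕ} (hn : 5 ≤ n) (ℓ : ℝ) (k : ℕ) : M n ℓ (k+1) ≤ M n ℓ k := by
  apply intervalIntegral.integral_mono_on (by norm_num)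
    (integ_fG hn ℓ _ (continuous_pow _)) (integ_fG hn ℓ _ (continuous_pow _))
  intro s hs
  have h1 : s^(2*(k+1)) ≤ s^(2*k) := by
    rw [pow_mul, pow_mul]
    exact pow_le_pow_of_le_one (sq_nonneg s) (by nlinarith [hs.1, hs.2]) (by omega)
  exact mul_le_mul_of_nonneg_right h1 (Gnonneg ℓ s hs)

lemma hM0le {n : ℕ} (hn : 5 ≤ n) {ℓ : ℝ} (hℓ : 0 ≤ ℓ) : M n ℓ 0 ≤ 2 := by
  have h2 : (2:ℝ) = ∫ _ in (-1:ℝ)..1, (1:ℝ) := by norm_num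
  rw [h2]
  apply intervalIntegral.integral_mono_on (by norm_num)
    (integ_fG hn ℓ _ (continuous_pow _)) intervalIntegrable_const
  intro s hs
  have h1s : (0:ℝ) ≤ 1 - s^2 := by nlinarith [hs.1, hs.2]
  have hn4 : (0:ℝ) ≤ (n:ℝ) - 4 := by
    have : (5:ℝ) ≤ (n:ℝ) := by exact_mod_cast hn
    linarith
  have he : Real.exp (-((n:ℝ)-4)*ℓ*s^2) ≤ 1 := by
    rw [Real.exp_le_one_iff]
    nlinarith [mul_nonneg (mul_nonneg hn4 hℓ) (sq_nonneg s)]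
  have hr : (1 - s^2) ^ (((n:ℝ)-2)/2) ≤ 1 :=
    Real.rpow_le_one h1s (by nlinarith) (hc0 hn)
  calc s^(2*0) * G n ℓ s = G n ℓ s := by norm_num
    _ ≤ 1 := by
        simp only [G]
        calc Real.exp (-((n:ℝ)-4)*ℓ*s^2) * (1-s^2)^(((n:ℝ)-2)/2)
            ≤ 1 * 1 := mul_le_mul he hr (Real.rpow_nonneg h1s _) (by norm_num)
          _ = 1 := by norm_num

lemma uexp {u : ℝ} (hu : 0 ≤ u) : u * Real.exp (-u) ≤ 1/2 := by
  have h1 : u ≤ Real.exp (u - 1) := by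
    have := Real.add_one_le_exp (u - 1)
    linarith
  have h2 : Real.exp (u-1) = Real.exp u * Real.exp (-1) := by
    rw [← Real.exp_add]; ring_nf
  have h3 : Real.exp (-1) ≤ 1/2 := by
    rw [Real.exp_neg]
    have h4 : (2:ℝ) ≤ Real.exp 1 := by
      have := Real.add_one_le_exp 1
      linarith
    rw [show (1:ℝ)/2 = (2:ℝ)⁻¹ by norm_num]
    exact inv_anti₀ (by norm_num) h4
  have h5 : u ≤ Real.exp u * (1/2) := by
    calc u ≤ Real.exp (u-1) := h1
      _ = Real.exp u * Real.exp (-1) := h2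
      _ ≤ Real.exp u * (1/2) := by
          exact mul_le_mul_of_nonneg_left h3 (Real.exp_nonneg u)
  have h6 : Real.exp u * Real.exp (-u) = 1 := by
    rw [← Real.exp_add]; norm_num
  have h7 := mul_le_mul_of_nonneg_right h5 (Real.exp_nonneg (-u))
  calc u * Real.exp (-u) ≤ Real.exp u * (1/2) * Real.exp (-u) := h7
    _ = Real.exp u * Real.exp (-u) * (1/2) := by ring
    _ = 1/2 := by rw [h6]; norm_num

lemma hM1le {n : ℕ} (hn : 5 ≤ n) {ℓ : ℝ} (hℓ : 2 ≤ ℓ) : M n ℓ 1 ≤ 1/ℓ := by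
  have hn5 : (5:ℝ) ≤ (n:ℝ) := by exact_mod_cast hn
  have hℓ0 : (0:ℝ) < ℓ := by linarith
  have h2 : (1:ℝ)/ℓ = ∫ _ in (-1:ℝ)..1, (1:ℝ)/(2*ℓ) := by
    rw [intervalIntegral.integral_const]
    rw [smul_eq_mul]
    field_simp
    norm_num
  rw [h2]
  apply intervalIntegral.integral_mono_on (by norm_num)
    (integ_fG hn ℓ _ (continuous_pow _)) intervalIntegrable_const
  intro s hs
  have h1s : (0:ℝ) ≤ 1 - s^2 := by nlinarith [hs.1, hs.2]
  have hn4 : (1:ℝ) ≤ (n:ℝ) - 4 := by linarith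
  set u : ℝ := ((n:ℝ)-4)*ℓ*s^2 with hu
  have hu0 : 0 ≤ u := by positivity
  have keyexp : -((n:ℝ)-4)*ℓ*s^2 = -u := by rw [hu]; ring
  have key : u * Real.exp (-u) ≤ 1/2 := uexp hu0
  have hr : (1 - s^2) ^ (((n:ℝ)-2)/2) ≤ 1 :=
    Real.rpow_le_one h1s (by nlinarith) (hc0 hn)
  have hstep : s^2 * Real.exp (-u) ≤ 1/(2*((n:ℝ)-4)*ℓ) := by
    rw [le_div_iff₀ (by positivity)]
    calc s^2 * Real.exp (-u) * (2*((n:ℝ)-4)*ℓ) = 2 * (u * Real.exp (-u)) := by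
          rw [hu]; ring
      _ ≤ 2 * (1/2) := by linarith
      _ = 1 := by norm_num
  calc s^(2*1) * G n ℓ s = s^2 * Real.exp (-u) * (1-s^2)^(((n:ℝ)-2)/2) := by
        simp only [G, keyexp]; ring
    _ ≤ s^2 * Real.exp (-u) * 1 :=
        mul_le_mul_of_nonneg_left hr (by positivity)
    _ = s^2 * Real.exp (-u) := by ring
    _ ≤ 1/(2*((n:ℝ)-4)*ℓ) := hstep
    _ ≤ 1/(2*ℓ) := by
        apply one_div_le_one_div_of_le (by positivity)
        nlinarith

lemma hM0ge {n : ℕ} (hn : 5 ≤ n) {ℓ : ℝ} (hℓ : 2 ≤ ℓ) :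
    Real.exp (-((n:ℝ)-4)) * (1/2:ℝ) ^ (((n:ℝ)-2)/2) * (2/Real.sqrt ℓ) ≤ M n ℓ 0 := by
  have hn5 : (5:ℝ) ≤ (n:ℝ) := by exact_mod_cast hn
  have hℓ0 : (0:ℝ) < ℓ := by linarith
  have hs0 : 0 < Real.sqrt ℓ := Real.sqrt_pos.2 hℓ0
  set r : ℝ := 1 / Real.sqrt ℓ with hr
  have hr0 : 0 < r := by positivity
  have hr1 : r ≤ 1 := by
    rw [hr, div_le_one hs0]
    calc (1:ℝ) = Real.sqrt 1 := Real.sqrt_one.symm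
      _ ≤ Real.sqrt ℓ := Real.sqrt_le_sqrt (by linarith)
  have hrsq : r^2 = 1/ℓ := by
    rw [hr, div_pow, one_pow, Real.sq_sqrt hℓ0.le]
  -- inner bound
  have step1 : Real.exp (-((n:ℝ)-4)) * (1/2:ℝ) ^ (((n:ℝ)-2)/2) * (2/Real.sqrt ℓ)
      ≤ ∫ s in (-r)..r, s^(2*0) * G n ℓ s := by
    have hconst : Real.exp (-((n:ℝ)-4)) * (1/2:ℝ) ^ (((n:ℝ)-2)/2) * (2/Real.sqrt ℓ)
        = ∫ _ in (-r)..r, Real.exp (-((n:ℝ)-4)) * (1/2:ℝ) ^ (((n:ℝ)-2)/2) := by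
      rw [intervalIntegral.integral_const, smul_eq_mul, hr]
      ring
    rw [hconst]
    apply intervalIntegral.integral_mono_on (by linarith)
      intervalIntegrable_const
    · apply ContinuousOn.intervalIntegrable
      apply ContinuousOn.mono (s := Set.uIcc (-1:ℝ) 1)
      · exact (continuous_pow _).continuousOn.mul (contG hn ℓ)
      · rw [Set.uIcc_of_le (by norm_num : (-1:ℝ) ≤ 1), Set.uIcc_of_le (by linarith : -r ≤ r)]
        exact Set.Icc_subset_Icc (by linarith) (by linarith)
    · intro s hs
      have hsr : s^2 ≤ r^2 := sq_le_sq' hs.1 hs.2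
      have hs2 : s^2 ≤ 1/ℓ := hrsq ▸ hsr
      have hhalf : (1:ℝ)/ℓ ≤ 1/2 := by
        apply one_div_le_one_div_of_le (by norm_num) hℓ
      have h1s : (1:ℝ)/2 ≤ 1 - s^2 := by linarith
      have hexp : Real.exp (-((n:ℝ)-4)) ≤ Real.exp (-((n:ℝ)-4)*ℓ*s^2) := by
        apply Real.exp_le_exp.2
        have h1 : ℓ * s^2 ≤ 1 := by
          have := mul_le_mul_of_nonneg_left hs2 hℓ0.le
          calc ℓ * s^2 ≤ ℓ * (1/ℓ) := this
            _ = 1 := by field_simp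
        nlinarith [mul_nonneg (mul_nonneg (by linarith : (0:ℝ) ≤ (n:ℝ)-4) hℓ0.le) (sq_nonneg s)]
      have hrp : (1/2:ℝ) ^ (((n:ℝ)-2)/2) ≤ (1-s^2) ^ (((n:ℝ)-2)/2) :=
        Real.rpow_le_rpow (by norm_num) h1s (hc0 hn)
      calc Real.exp (-((n:ℝ)-4)) * (1/2:ℝ) ^ (((n:ℝ)-2)/2)
          ≤ Real.exp (-((n:ℝ)-4)*ℓ*s^2) * (1-s^2) ^ (((n:ℝ)-2)/2) :=
            mul_le_mul hexp hrp (by positivity) (Real.exp_nonneg _)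
        _ = s^(2*0) * G n ℓ s := by simp [G]
  -- extend to full interval
  have step2 : (∫ s in (-r)..r, s^(2*0) * G n ℓ s) ≤ M n ℓ 0 := by
    apply intervalIntegral.integral_mono_interval (by linarith : (-1:ℝ) ≤ -r)
      (by linarith : -r ≤ r) (by linarith : r ≤ 1)
    · rw [Filter.EventuallyLE, ae_restrict_iff' measurableSet_Ioc]
      filter_upwards with s hs
      exact mul_nonneg (by rw [pow_mul]; positivity)
        (Gnonneg ℓ s ⟨hs.1.le, hs.2⟩)
    · exact integ_fG hn ℓ _ (continuous_pow _)
  linarith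

lemma hVpos {n : ℕ} (hn : 5 ≤ n) (ℓ : ℝ) : 0 < V n ℓ := by
  apply intervalIntegral.intervalIntegral_pos_of_pos_on
  · apply ContinuousOn.intervalIntegrable
    exact (Continuous.continuousOn (by fun_prop)).mul (contOn_rpow _ (hc0 hn))
  · intro s hs
    have h1s : (0:ℝ) < 1 - s^2 := by nlinarith [hs.1, hs.2]
    exact mul_pos (Real.exp_pos _) (Real.rpow_pos_of_pos h1s _)
  · norm_num

lemma hVle {n : ℕ} (hn : 5 ≤ n) {ℓ : ℝ} (hℓ : 0 ≤ ℓ) : V n ℓ ≤ 2 := by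
  have hn5 : (5:ℝ) ≤ (n:ℝ) := by exact_mod_cast hn
  have h2 : (2:ℝ) = ∫ _ in (-1:ℝ)..1, (1:ℝ) := by norm_num
  rw [h2, V]
  apply intervalIntegral.integral_mono_on (by norm_num)
  · apply ContinuousOn.intervalIntegrable
    exact (Continuous.continuousOn (by fun_prop)).mul (contOn_rpow _ (hc0 hn))
  · exact intervalIntegrable_const
  · intro s hs
    have h1s : (0:ℝ) ≤ 1 - s^2 := by nlinarith [hs.1, hs.2]
    have he : Real.exp (-(n:ℝ)*ℓ*s^2) ≤ 1 := by
      rw [Real.exp_le_one_iff]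
      nlinarith [mul_nonneg (mul_nonneg (by linarith : (0:ℝ) ≤ (n:ℝ)) hℓ) (sq_nonneg s)]
    have hrr : (1 - s^2) ^ (((n:ℝ)-2)/2) ≤ 1 :=
      Real.rpow_le_one h1s (by nlinarith) (hc0 hn)
    calc Real.exp (-(n:ℝ)*ℓ*s^2) * (1-s^2)^(((n:ℝ)-2)/2)
        ≤ 1 * 1 := mul_le_mul he hrr (Real.rpow_nonneg h1s _) (by norm_num)
      _ = 1 := by norm_num

lemma hA {n : ℕ} (hn : 5 ≤ n) (ℓ : ℝ) : I2 n ℓ =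
    ((n:ℝ)-1)*((n:ℝ)/8+ℓ) * M n ℓ 0
    + ((n:ℝ)-1)*(-((n:ℝ)+1)*ℓ-((n:ℝ)+2)*ℓ^2-4*ℓ^3) * M n ℓ 1
    + ((n:ℝ)-1)*((3*(n:ℝ)+2)*ℓ^2+4*(n:ℝ)*ℓ^3+2*((n:ℝ)-4)*ℓ^4) * M n ℓ 2
    + ((n:ℝ)-1)*(-4*((n:ℝ)-1)*ℓ^3-4*((n:ℝ)-4)*ℓ^4) * M n ℓ 3
    + ((n:ℝ)-1)*(2*((n:ℝ)-4)*ℓ^4) * M n ℓ 4 := by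
  rw [← split5 hn ℓ (((n:ℝ)-1)*((n:ℝ)/8+ℓ)) (((n:ℝ)-1)*(-((n:ℝ)+1)*ℓ-((n:ℝ)+2)*ℓ^2-4*ℓ^3))
    (((n:ℝ)-1)*((3*(n:ℝ)+2)*ℓ^2+4*(n:ℝ)*ℓ^3+2*((n:ℝ)-4)*ℓ^4))
    (((n:ℝ)-1)*(-4*((n:ℝ)-1)*ℓ^3-4*((n:ℝ)-4)*ℓ^4)) (((n:ℝ)-1)*(2*((n:ℝ)-4)*ℓ^4)), I2]
  exact intervalIntegral.integral_congr fun s _ => by simp only [lam1, lam2, G]; push_cast; ring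

lemma hKEY {n : ℕ} (hn : 5 ≤ n) (ℓ : ℝ) :
    2*((n:ℝ)-4) * I2 n ℓ = ((n:ℝ)-1) * (
      (((n:ℝ)-4)*(n:ℝ)/4 + 2*((n:ℝ)-4)*ℓ - ℓ^2) * M n ℓ 0
      + (-((n:ℝ)+1)*(2*((n:ℝ)-4)*ℓ-ℓ^2) - 2*((n:ℝ)-4)*((n:ℝ)+2)*ℓ^2 + 9*((n:ℝ)-3)*ℓ^2) * M n ℓ 1
      + (4*((n:ℝ)-4)*((n:ℝ)+2)*ℓ^2 + 2*((n:ℝ)-4)*((n:ℝ)-2)*ℓ^2 - 3*((n:ℝ)-3)*((n:ℝ)+3)*ℓ^2) * M n ℓ 2 ) := by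
  have h0 := hR hn ℓ 0
  have h1 := hR hn ℓ 1
  have h2 := hR hn ℓ 2
  norm_num at h0 h1 h2
  linear_combination (2*((n:ℝ)-4)) * hA hn ℓ + ((n:ℝ)-1) * (ℓ^2 * h0
    - (3*((n:ℝ)-3)*ℓ^2 + 2*((n:ℝ)-4)*ℓ^3) * h1 + 2*((n:ℝ)-4)*ℓ^3 * h2)

lemma hIneq {n : ℕ} (hn : 5 ≤ n) {ℓ : ℝ} (hℓ : 2 ≤ ℓ) :
    2*((n:ℝ)-4) * I2 n ℓ ≤ ((n:ℝ)-1) *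
      (-2*(Real.exp (-((n:ℝ)-4)) * (1/2:ℝ) ^ (((n:ℝ)-2)/2)) * ℓ * Real.sqrt ℓ
        + 14*(n:ℝ)^2*ℓ) := by
  have hn5 : (5:ℝ) ≤ (n:ℝ) := by exact_mod_cast hn
  have hℓ0 : (0:ℝ) < ℓ := by linarith
  have hs0 : 0 < Real.sqrt ℓ := Real.sqrt_pos.2 hℓ0
  have hsq : Real.sqrt ℓ * Real.sqrt ℓ = ℓ := Real.mul_self_sqrt hℓ0.le
  set K : ℝ := Real.exp (-((n:ℝ)-4)) * (1/2:ℝ) ^ (((n:ℝ)-2)/2) with hK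
  have hK0 : 0 < K := by rw [hK]; positivity
  have hM0l := hM0le hn hℓ0.le
  have hM0g := hM0ge hn hℓ
  have hM1l := hM1le hn hℓ
  have hM1n := hMnonneg (n := n) ℓ 1
  have hM2n := hMnonneg (n := n) ℓ 2
  have hM2l : M n ℓ 2 ≤ 1/ℓ := le_trans (hMmono hn ℓ 1) hM1l
  -- term 0
  have hb0 : (((n:ℝ)-4)*(n:ℝ)/4 + 2*((n:ℝ)-4)*ℓ - ℓ^2) * M n ℓ 0
      ≤ (((n:ℝ)-4)*(n:ℝ)/4 + 2*((n:ℝ)-4)*ℓ)*2 - ℓ^2*(K*(2/Real.sqrt ℓ)) := by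
    have t1 : (((n:ℝ)-4)*(n:ℝ)/4 + 2*((n:ℝ)-4)*ℓ) * M n ℓ 0
        ≤ (((n:ℝ)-4)*(n:ℝ)/4 + 2*((n:ℝ)-4)*ℓ)*2 :=
      mul_le_mul_of_nonneg_left hM0l (by nlinarith)
    have t2 : ℓ^2*(K*(2/Real.sqrt ℓ)) ≤ ℓ^2 * M n ℓ 0 :=
      mul_le_mul_of_nonneg_left hM0g (sq_nonneg ℓ)
    nlinarith [t1, t2]
  -- term 1
  have hb1 : (-((n:ℝ)+1)*(2*((n:ℝ)-4)*ℓ-ℓ^2) - 2*((n:ℝ)-4)*((n:ℝ)+2)*ℓ^2 + 9*((n:ℝ)-3)*ℓ^2) * M n ℓ 1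
      ≤ 11*(n:ℝ)*ℓ := by
    have e1 : (0:ℝ) ≤ ((n:ℝ)-4)*ℓ := mul_nonneg (by linarith) hℓ0.le
    have e2 : (0:ℝ) ≤ ((n:ℝ)-4)*ℓ^2 := mul_nonneg (by linarith) (sq_nonneg ℓ)
    have e3 : (0:ℝ) ≤ ℓ^2 := sq_nonneg ℓ
    have hc : (-((n:ℝ)+1)*(2*((n:ℝ)-4)*ℓ-ℓ^2) - 2*((n:ℝ)-4)*((n:ℝ)+2)*ℓ^2 + 9*((n:ℝ)-3)*ℓ^2)
        ≤ 11*(n:ℝ)*ℓ^2 := by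
      nlinarith [mul_nonneg (show (0:ℝ) ≤ (n:ℝ)+1 by linarith) e1,
        mul_nonneg (show (0:ℝ) ≤ (n:ℝ)+2 by linarith) e2,
        mul_nonneg (show (0:ℝ) ≤ (n:ℝ)+26 by linarith) e3]
    calc (-((n:ℝ)+1)*(2*((n:ℝ)-4)*ℓ-ℓ^2) - 2*((n:ℝ)-4)*((n:ℝ)+2)*ℓ^2 + 9*((n:ℝ)-3)*ℓ^2) * M n ℓ 1
        ≤ 11*(n:ℝ)*ℓ^2 * M n ℓ 1 := mul_le_mul_of_nonneg_right hc hM1n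
      _ ≤ 11*(n:ℝ)*ℓ^2 * (1/ℓ) := mul_le_mul_of_nonneg_left hM1l (by positivity)
      _ = 11*(n:ℝ)*ℓ := by field_simp
  -- term 2
  have hb2 : (4*((n:ℝ)-4)*((n:ℝ)+2)*ℓ^2 + 2*((n:ℝ)-4)*((n:ℝ)-2)*ℓ^2 - 3*((n:ℝ)-3)*((n:ℝ)+3)*ℓ^2) * M n ℓ 2
      ≤ 10*(n:ℝ)^2*ℓ := by
    have hc : (4*((n:ℝ)-4)*((n:ℝ)+2)*ℓ^2 + 2*((n:ℝ)-4)*((n:ℝ)-2)*ℓ^2 - 3*((n:ℝ)-3)*((n:ℝ)+3)*ℓ^2)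
        ≤ 10*(n:ℝ)^2*ℓ^2 := by
      nlinarith [mul_nonneg (show (0:ℝ) ≤ 7*(n:ℝ)^2+20*(n:ℝ)-11 by nlinarith) (sq_nonneg ℓ)]
    calc (4*((n:ℝ)-4)*((n:ℝ)+2)*ℓ^2 + 2*((n:ℝ)-4)*((n:ℝ)-2)*ℓ^2 - 3*((n:ℝ)-3)*((n:ℝ)+3)*ℓ^2) * M n ℓ 2
        ≤ 10*(n:ℝ)^2*ℓ^2 * M n ℓ 2 := mul_le_mul_of_nonneg_right hc hM2n
      _ ≤ 10*(n:ℝ)^2*ℓ^2 * (1/ℓ) := mul_le_mul_of_nonneg_left hM2l (by positivity)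
      _ = 10*(n:ℝ)^2*ℓ := by field_simp
  -- combine
  have hsum : (((n:ℝ)-4)*(n:ℝ)/4 + 2*((n:ℝ)-4)*ℓ - ℓ^2) * M n ℓ 0
      + (-((n:ℝ)+1)*(2*((n:ℝ)-4)*ℓ-ℓ^2) - 2*((n:ℝ)-4)*((n:ℝ)+2)*ℓ^2 + 9*((n:ℝ)-3)*ℓ^2) * M n ℓ 1
      + (4*((n:ℝ)-4)*((n:ℝ)+2)*ℓ^2 + 2*((n:ℝ)-4)*((n:ℝ)-2)*ℓ^2 - 3*((n:ℝ)-3)*((n:ℝ)+3)*ℓ^2) * M n ℓ 2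
      ≤ -2*K*ℓ*Real.sqrt ℓ + 14*(n:ℝ)^2*ℓ := by
    have heq : ℓ^2*(K*(2/Real.sqrt ℓ)) = 2*K*ℓ*Real.sqrt ℓ := by
      rw [eq_comm, mul_comm]
      field_simp
      linear_combination hsq
    have hrest : (((n:ℝ)-4)*(n:ℝ)/4 + 2*((n:ℝ)-4)*ℓ)*2 + 11*(n:ℝ)*ℓ + 10*(n:ℝ)^2*ℓ
        ≤ 14*(n:ℝ)^2*ℓ := by
      nlinarith [mul_nonneg (show (0:ℝ) ≤ ℓ-2 by linarith) (sq_nonneg (n:ℝ)),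
        mul_nonneg (mul_nonneg (show (0:ℝ) ≤ (n:ℝ) by linarith) hℓ0.le)
          (show (0:ℝ) ≤ 15*(n:ℝ)/4-15 by linarith)]
    nlinarith [hb0, hb1, hb2, heq]
  calc 2*((n:ℝ)-4) * I2 n ℓ = ((n:ℝ)-1) * (_ + _ + _) := hKEY hn ℓ
    _ ≤ ((n:ℝ)-1) * (-2*K*ℓ*Real.sqrt ℓ + 14*(n:ℝ)^2*ℓ) :=
        mul_le_mul_of_nonneg_left hsum (by linarith)
    _ = ((n:ℝ)-1) * (-2*K * ℓ * Real.sqrt ℓ + 14*(n:ℝ)^2*ℓ) := by ring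

end Stmt13Aux

open Stmt13Aux in
/-- For `n ≥ 5`, `V(ℓ) > 0` for every `ℓ > 0`, and
`I₂(ℓ) / V(ℓ)^{(n−4)/n} → −∞` as `ℓ → ∞`. -/
theorem stmt13 (n : ℕ) (hn : 5 ≤ n) :
    (∀ ℓ : ℝ, 0 < ℓ → 0 < V n ℓ) ∧
      Tendsto (fun ℓ : ℝ => I2 n ℓ / (V n ℓ) ^ (((n : ℝ) - 4) / (n : ℝ)))
        atTop atBot := by
  have hn5 : (5:ℝ) ≤ (n:ℝ) := by exact_mod_cast hn
  refine ⟨fun ℓ _ => hVpos hn ℓ, ?_⟩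
  set K : ℝ := Real.exp (-((n:ℝ)-4)) * (1/2:ℝ) ^ (((n:ℝ)-2)/2) with hK
  have hK0 : 0 < K := by rw [hK]; positivity
  set a : ℝ := (n:ℝ) - 4 with ha
  have ha0 : (0:ℝ) < a := by rw [ha]; linarith
  -- the majorant φ
  set φ : ℝ → ℝ := fun ℓ => ((n:ℝ)-1) * (-2*K*ℓ*Real.sqrt ℓ + 14*(n:ℝ)^2*ℓ) / (2*a) with hφ
  -- φ tends to -∞
  have hsqrt : Tendsto Real.sqrt atTop atTop := by
    apply tendsto_atTop_atTop_of_monotone (fun x y h => Real.sqrt_le_sqrt h)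
    intro b
    exact ⟨b^2, by rw [Real.sqrt_sq_eq_abs]; exact le_abs_self b⟩
  have hφtend : Tendsto φ atTop atBot := by
    have hrw : φ = fun ℓ : ℝ => ℓ * (((n:ℝ)-1)/(2*a) * (14*(n:ℝ)^2 - 2*K*Real.sqrt ℓ)) := by
      funext ℓ
      rw [hφ]
      field_simp
      ring
    rw [hrw]
    apply Filter.Tendsto.atTop_mul_atBot₀ tendsto_id
    apply Filter.Tendsto.const_mul_atBot (div_pos (by linarith) (by linarith) : (0:ℝ) < ((n:ℝ)-1)/(2*a))
    have h1 : Tendsto (fun ℓ : ℝ => 2*K*Real.sqrt ℓ) atTop atTop :=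
      Filter.Tendsto.const_mul_atTop (by positivity) hsqrt
    have h2 : Tendsto (fun ℓ : ℝ => -(2*K*Real.sqrt ℓ)) atTop atBot :=
      tendsto_neg_atTop_atBot.comp h1
    simpa [sub_eq_add_neg] using tendsto_atBot_add_const_left atTop (14*(n:ℝ)^2) h2
  -- I2 eventually below φ
  have hI : ∀ ℓ : ℝ, 2 ≤ ℓ → I2 n ℓ ≤ φ ℓ := by
    intro ℓ hℓ
    have h := hIneq hn hℓ
    rw [hφ, le_div_iff₀ (by positivity : (0:ℝ) < 2*a)]
    calc I2 n ℓ * (2*a) = 2*a*I2 n ℓ := by ring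
      _ ≤ ((n:ℝ)-1) * (-2*K*ℓ*Real.sqrt ℓ + 14*(n:ℝ)^2*ℓ) := by
          calc 2*a*I2 n ℓ = 2*((n:ℝ)-4)*I2 n ℓ := by rw [ha]
            _ ≤ _ := h
            _ = ((n:ℝ)-1) * (-2*K*ℓ*Real.sqrt ℓ + 14*(n:ℝ)^2*ℓ) := by rw [hK]
  -- eventual bound on the quotient
  have hev : ∀ᶠ ℓ : ℝ in atTop, I2 n ℓ / (V n ℓ) ^ (((n:ℝ)-4)/(n:ℝ)) ≤ φ ℓ * (1/2) := by
    filter_upwards [eventually_ge_atTop (2:ℝ), hφtend.eventually (eventually_le_atBot (0:ℝ))]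
      with ℓ hℓ2 hφ0
    have hI2le : I2 n ℓ ≤ φ ℓ := hI ℓ hℓ2
    have hI2neg : I2 n ℓ ≤ 0 := le_trans hI2le hφ0
    have hV0 : 0 < V n ℓ := hVpos hn ℓ
    have hp0 : 0 ≤ ((n:ℝ)-4)/(n:ℝ) := by positivity
    have hp1 : ((n:ℝ)-4)/(n:ℝ) ≤ 1 := by
      rw [div_le_one (by linarith)]; linarith
    have hVp0 : 0 < (V n ℓ) ^ (((n:ℝ)-4)/(n:ℝ)) := Real.rpow_pos_of_pos hV0 _
    have hVp2 : (V n ℓ) ^ (((n:ℝ)-4)/(n:ℝ)) ≤ 2 := by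
      calc (V n ℓ) ^ (((n:ℝ)-4)/(n:ℝ)) ≤ (2:ℝ) ^ (((n:ℝ)-4)/(n:ℝ)) :=
            Real.rpow_le_rpow hV0.le (hVle hn (by linarith)) hp0
        _ ≤ (2:ℝ) ^ (1:ℝ) := Real.rpow_le_rpow_of_exponent_le (by norm_num) hp1
        _ = 2 := by norm_num
    have hinv : (2:ℝ)⁻¹ ≤ ((V n ℓ) ^ (((n:ℝ)-4)/(n:ℝ)))⁻¹ :=
      inv_anti₀ hVp0 hVp2
    calc I2 n ℓ / (V n ℓ) ^ (((n:ℝ)-4)/(n:ℝ))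
        = I2 n ℓ * ((V n ℓ) ^ (((n:ℝ)-4)/(n:ℝ)))⁻¹ := div_eq_mul_inv _ _
      _ ≤ I2 n ℓ * (2:ℝ)⁻¹ := mul_le_mul_of_nonpos_left hinv hI2neg
      _ ≤ φ ℓ * (2:ℝ)⁻¹ := mul_le_mul_of_nonneg_right hI2le (by norm_num)
      _ = φ ℓ * (1/2) := by norm_num
  have hφhalf : Tendsto (fun ℓ => φ ℓ * (1/2)) atTop atBot := by
    have := hφtend.atBot_mul_const (by norm_num : (0:ℝ) < 1/2)
    exact this
  exact tendsto_atBot_mono' atTop hev hφhalf
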